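/- arXiv:1902.07414 — 3 statements merged into one kernel-verified Lean document; each statement's English description precedes it below -/
import Mathlib

section
/- For any polynomial f in k variables with complex coefficients, there exists a polynomial F in one variable such that for all natural numbers n, F(n) = ∑_{1 ≤ i_1 < i_2 < ⋯ < i_k ≤ n} f(i_1, …, i_k). -/
open Finset Polynomial

lemma aux_pow_sum (e : ℕ) : ∃ Q : Polynomial ℂ, ∀ n : ℕ,
    Q.eval (n : ℂ) = ∑ m ∈ Finset.Icc 1 n, (m : ℂ) ^ e := by
  set Rq : Polynomial ℚ :=
    (∑ i ∈ Finset.range (e+1),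
      Polynomial.C (_root_.bernoulli i * ((e+1).choose i) / (e+1)) * Polynomial.X ^ (e+1-i)).comp
      (Polynomial.X + 1) - Polynomial.C ((0:ℚ)^e) with hRq
  have hq : ∀ n : ℕ, Rq.eval (n:ℚ) = ∑ m ∈ Finset.Icc 1 n, (m:ℚ)^e := by
    intro n
    have h1 := sum_range_pow (n+1) e
    have hins : Finset.range (n+1) = insert 0 (Finset.Icc 1 n) := by
      ext x; simp [Nat.lt_succ_iff]; omega
    have h2 : ∑ m ∈ Finset.Icc 1 n, (m:ℚ)^e
        = (∑ k ∈ Finset.range (n+1), (k:ℚ)^e) - (0:ℚ)^e := by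
      rw [hins, Finset.sum_insert (by simp)]; push_cast; ring
    rw [h2, h1, hRq]
    simp only [Polynomial.eval_sub, Polynomial.eval_comp, Polynomial.eval_add,
      Polynomial.eval_X, Polynomial.eval_one, Polynomial.eval_C, Polynomial.eval_finset_sum,
      Polynomial.eval_mul, Polynomial.eval_pow]
    push_cast [div_eq_mul_inv]
    ring_nf
    congr 1
    exact Finset.sum_congr rfl fun x hx => by ring
  refine ⟨Rq.map (algebraMap ℚ ℂ), fun n => ?_⟩
  rw [Polynomial.eval_map, Polynomial.eval₂_at_natCast, hq]
  push_cast [map_sum]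
  simp

lemma polyfun_sum_Icc (p : Polynomial ℂ) : ∃ P : Polynomial ℂ, ∀ n : ℕ,
    P.eval (n:ℂ) = ∑ m ∈ Finset.Icc 1 n, p.eval (m:ℂ) := by
  induction p using Polynomial.induction_on' with
  | add p q hp hq =>
    obtain ⟨P, hP⟩ := hp; obtain ⟨Q, hQ⟩ := hq
    exact ⟨P + Q, fun n => by simp [hP, hQ, Finset.sum_add_distrib]⟩
  | monomial e a =>
    obtain ⟨Q, hQ⟩ := aux_pow_sum e
    refine ⟨Polynomial.C a * Q, fun n => ?_⟩
    simp [hQ, Finset.mul_sum, Polynomial.eval_monomial]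

lemma key_mono (k : ℕ) : ∀ d : Fin k → ℕ, ∃ F : Polynomial ℂ, ∀ n : ℕ,
    F.eval (n:ℂ) = ∑ i ∈ (Fintype.piFinset fun _ : Fin k => Finset.Icc 1 n).filter
        (fun i => ∀ a b : Fin k, a < b → i a < i b),
      ∏ t, (i t : ℂ) ^ (d t) := by
  induction k with
  | zero =>
    intro d
    refine ⟨1, fun n => ?_⟩
    simp
  | succ k ih =>
    intro d
    obtain ⟨G, hG⟩ := ih (fun t => d t.castSucc)
    obtain ⟨P, hP⟩ := polyfun_sum_Icc (Polynomial.X ^ (d (Fin.last k)) * G.comp (Polynomial.X - 1))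
    refine ⟨P, fun n => ?_⟩
    rw [hP]
    have step : ∑ i ∈ (Fintype.piFinset fun _ : Fin (k+1) => Finset.Icc 1 n).filter
        (fun i => ∀ a b : Fin (k+1), a < b → i a < i b),
        ∏ t, (i t : ℂ) ^ (d t)
      = ∑ m ∈ Finset.Icc 1 n, ∑ j ∈ (Fintype.piFinset fun _ : Fin k => Finset.Icc 1 (m-1)).filter
          (fun j => ∀ a b : Fin k, a < b → j a < j b),
          ∏ t : Fin (k+1), ((Fin.snoc j m : Fin (k+1) → ℕ) t : ℂ) ^ (d t) := by
      rw [Finset.sum_sigma']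
      refine (Finset.sum_bij' (fun i _ => (⟨i (Fin.last k), fun t => i t.castSucc⟩ :
            Σ _m : ℕ, Fin k → ℕ))
        (fun p _ => Fin.snoc p.2 p.1) ?_ ?_ ?_ ?_ ?_)
      · -- hi : image in sigma set
        intro i hi
        simp only [Finset.mem_filter, Fintype.mem_piFinset, Finset.mem_Icc] at hi ⊢
        rw [Finset.mem_sigma]
        obtain ⟨hmem, hmono⟩ := hi
        refine ⟨by simpa using hmem (Fin.last k), ?_⟩
        simp only [Finset.mem_filter, Fintype.mem_piFinset, Finset.mem_Icc]
        refine ⟨fun t => ?_, fun a b hab => hmono _ _ (by simpa using hab)⟩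
        have h1 := (hmem t.castSucc).1
        have h2 : i t.castSucc < i (Fin.last k) := hmono _ _ (Fin.castSucc_lt_last t)
        omega
      · -- hj
        intro p hp
        rw [Finset.mem_sigma] at hp
        obtain ⟨hm, hj⟩ := hp
        simp only [Finset.mem_filter, Fintype.mem_piFinset, Finset.mem_Icc] at hm hj ⊢
        obtain ⟨hjmem, hjmono⟩ := hj
        constructor
        · intro t
          refine Fin.lastCases ?_ (fun s => ?_) t
          · simpa using hm
          · have := hjmem s
            simp only [Fin.snoc_castSucc]
            omega
        · intro a b hab
          refine Fin.lastCases ?_ (fun b' hab => ?_) b hab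
          · intro hab
            have ha : a ≠ Fin.last k := Fin.ne_last_of_lt hab
            obtain ⟨a', rfl⟩ := Fin.exists_castSucc_eq.2 ha
            simp only [Fin.snoc_castSucc, Fin.snoc_last]
            have := (hjmem a').2
            omega
          · have hb : b'.castSucc ≠ Fin.last k := Fin.ne_last_of_lt (Fin.castSucc_lt_last b')
            have ha : a ≠ Fin.last k := Fin.ne_last_of_lt (lt_of_lt_of_le hab (le_of_lt (Fin.castSucc_lt_last b')))
            obtain ⟨a', rfl⟩ := Fin.exists_castSucc_eq.2 ha
            simp only [Fin.snoc_castSucc]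
            exact hjmono _ _ (by simpa using hab)
      · -- left_inv
        intro i _
        exact Fin.snoc_init_self i
      · -- right_inv
        intro p _
        refine Sigma.ext ?_ ?_
        · simp
        · simp [Fin.init_snoc]
      · -- values
        intro i _
        refine Finset.prod_congr rfl fun t _ => ?_
        congr 1
        refine Fin.lastCases ?_ (fun s => ?_) t <;> simp
    rw [step]
    refine Finset.sum_congr rfl fun m hm => ?_
    rw [Finset.mem_Icc] at hm
    have hcast : ((m:ℂ) - 1) = ((m - 1 : ℕ) : ℂ) := by
      push_cast [Nat.cast_sub hm.1]; ring
    simp only [Polynomial.eval_mul, Polynomial.eval_pow, Polynomial.eval_X,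
      Polynomial.eval_comp, Polynomial.eval_sub, Polynomial.eval_one, hcast, hG]
    rw [Finset.mul_sum]
    refine Finset.sum_congr rfl fun j _ => ?_
    rw [Fin.prod_univ_castSucc]
    simp [mul_comm]

/-- For any polynomial `f` in `k` variables there is a one-variable polynomial `F`
such that `F(n) = ∑_{1 ≤ i₁ < i₂ < ⋯ < i_k ≤ n} f(i₁, …, i_k)` for all `n`. -/
theorem sum_over_increasing_tuples_is_polynomial (k : ℕ) (f : MvPolynomial (Fin k) ℂ) :
    ∃ F : Polynomial ℂ, ∀ n : ℕ,
      F.eval (n : ℂ) =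
        ∑ i ∈ (Fintype.piFinset fun _ : Fin k => Finset.Icc 1 n).filter
            (fun i => ∀ a b : Fin k, a < b → i a < i b),
          MvPolynomial.eval (fun t => (i t : ℂ)) f := by
  induction f using MvPolynomial.induction_on' with
  | add p q hp hq =>
    obtain ⟨P, hP⟩ := hp; obtain ⟨Q, hQ⟩ := hq
    exact ⟨P + Q, fun n => by simp [hP, hQ, Finset.sum_add_distrib]⟩
  | monomial u a =>
    obtain ⟨F, hF⟩ := key_mono k (fun t => u t)
    refine ⟨Polynomial.C a * F, fun n => ?_⟩
    simp only [Polynomial.eval_mul, Polynomial.eval_C, hF, Finset.mul_sum,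
      MvPolynomial.eval_monomial]
    refine Finset.sum_congr rfl fun i _ => ?_
    rw [Finsupp.prod_pow]
end

section
/- In the expansion (∂+I_1)⋯(∂+I_n) = ∂^n + ∑_j {}^nU_j ∂^{n−j}, one has {}^nU_3 = ∑_{i_1<i_2<i_3} I_{i_1}I_{i_2}I_{i_3} + ∑_{i_1<i_2} (i_1−1) I_{i_1}' I_{i_2} + ∑_{i_1<i_2} (i_2−2) I_{i_1} I_{i_2}' + ∑_i C(i−1, 2) I_i''. -/
/-- The coefficients of the Miura product
`(∂+I₁)(∂+I₂)⋯(∂+I_n) = ∂^n + ∑_{j≥1} U_j ∂^{n-j}` over a commutative ring `R`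
with derivation `δ`; `miuraCoeff δ I n j` is the coefficient `U_j`
(of `∂^{n-j}`), computed using `∂·f = f·∂ + δ f`. -/
def miuraCoeff {R : Type*} [CommRing R] (δ : R → R) : (I : ℕ → R) → ℕ → ℕ → R
  | _, 0, j => if j = 0 then 1 else 0
  | I, n + 1, j =>
      miuraCoeff δ (fun m => I (m + 1)) n j +
        if j = 0 then 0 else
          δ (miuraCoeff δ (fun m => I (m + 1)) n (j - 1)) +
            I 1 * miuraCoeff δ (fun m => I (m + 1)) n (j - 1)

section aux
variable {R : Type*} [CommRing R] {δ : R → R}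
  (hadd : ∀ a b : R, δ (a + b) = δ a + δ b)
  (hleib : ∀ a b : R, δ (a * b) = a * δ b + δ a * b)

include hadd in
lemma dzero : δ 0 = 0 := by
  have h := hadd 0 0
  rw [add_zero] at h
  exact (left_eq_add.mp h)

include hleib in
lemma done : δ 1 = 0 := by
  have h := hleib 1 1
  simp only [mul_one, one_mul] at h
  exact (left_eq_add.mp h)

include hadd hleib in
lemma dnat (n : ℕ) : δ (n : R) = 0 := by
  induction n with
  | zero => exact_mod_cast dzero hadd
  | succ k ih => push_cast; rw [hadd, ih, done hleib, add_zero]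

include hadd in
lemma dsum {ι : Type*} (s : Finset ι) (f : ι → R) :
    δ (∑ i ∈ s, f i) = ∑ i ∈ s, δ (f i) := by
  classical
  induction s using Finset.induction_on with
  | empty => simpa using dzero hadd
  | insert _ _ h ih => rw [Finset.sum_insert h, hadd, ih, Finset.sum_insert h]

include hadd hleib in
lemma dcmul (n : ℕ) (x : R) : δ ((n : R) * x) = (n : R) * δ x := by
  rw [hleib, dnat hadd hleib, zero_mul, add_zero]

lemma miura0 (n : ℕ) (I : ℕ → R) : miuraCoeff δ I n 0 = 1 := by
  induction n generalizing I with
  | zero => simp [miuraCoeff]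
  | succ k ih => simp [miuraCoeff, ih]

include hleib in
lemma miura1 (n : ℕ) (I : ℕ → R) :
    miuraCoeff δ I n 1 = ∑ i ∈ Finset.range n, I (i + 1) := by
  induction n generalizing I with
  | zero => simp [miuraCoeff]
  | succ k ih =>
    rw [Finset.sum_range_succ']
    simp [miuraCoeff, miura0, done hleib, ih]

include hadd hleib in
lemma miura2 (n : ℕ) (I : ℕ → R) :
    miuraCoeff δ I n 2 =
      (∑ j ∈ Finset.range n, ∑ i ∈ Finset.range j, I (i + 1) * I (j + 1)) +
      ∑ j ∈ Finset.range n, (j : R) * δ (I (j + 1)) := by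
  induction n generalizing I with
  | zero => simp [miuraCoeff]
  | succ k ih =>
    have hu : miuraCoeff δ I (k+1) 2 =
        miuraCoeff δ (fun m => I (m + 1)) k 2 +
          (δ (miuraCoeff δ (fun m => I (m + 1)) k 1) +
            I 1 * miuraCoeff δ (fun m => I (m + 1)) k 1) := by
      simp [miuraCoeff]
    rw [hu, ih, miura1 hleib, dsum hadd, Finset.sum_range_succ',
      Finset.sum_range_succ']
    simp only [Nat.cast_add, Nat.cast_zero, Nat.cast_one, zero_mul,
      Finset.sum_range_succ', Finset.mul_sum]
    rw [Finset.sum_range_zero, add_zero]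
    rw [show (∑ j ∈ Finset.range k, (((j:R) + 1) * δ (I (j + 1 + 1)))) =
      ∑ j ∈ Finset.range k, ((j:R) * δ (I (j + 1 + 1)) + δ (I (j + 1 + 1))) from
      Finset.sum_congr rfl fun j _ => by ring]
    rw [show (∑ j ∈ Finset.range k,
        ((∑ i ∈ Finset.range j, I (i + 1 + 1) * I (j + 1 + 1)) + I 1 * I (j + 1 + 1))) =
      (∑ j ∈ Finset.range k, ∑ i ∈ Finset.range j, I (i + 1 + 1) * I (j + 1 + 1)) +
        ∑ j ∈ Finset.range k, I 1 * I (j + 1 + 1) from Finset.sum_add_distrib]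
    rw [Finset.sum_add_distrib]
    ring

include hadd hleib in
lemma miura3r (n : ℕ) (I : ℕ → R) :
    miuraCoeff δ I n 3 =
      (∑ k ∈ Finset.range n, ∑ j ∈ Finset.range k, ∑ i ∈ Finset.range j,
          I (i + 1) * I (j + 1) * I (k + 1)) +
      (∑ j ∈ Finset.range n, ∑ i ∈ Finset.range j,
          (i : R) * δ (I (i + 1)) * I (j + 1)) +
      (∑ j ∈ Finset.range n, ∑ i ∈ Finset.range j,
          ((j : R) - 1) * (I (i + 1) * δ (I (j + 1)))) +
      ∑ i ∈ Finset.range n, ((i.choose 2 : ℕ) : R) * δ (δ (I (i + 1))) := by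
  induction n generalizing I with
  | zero => simp [miuraCoeff]
  | succ k ih =>
    have hu : miuraCoeff δ I (k+1) 3 =
        miuraCoeff δ (fun m => I (m + 1)) k 3 +
          (δ (miuraCoeff δ (fun m => I (m + 1)) k 2) +
            I 1 * miuraCoeff δ (fun m => I (m + 1)) k 2) := by
      simp [miuraCoeff]
    rw [hu, ih, miura2 hadd hleib]
    -- LHS pieces
    have hδS : δ (∑ j ∈ Finset.range k, ∑ i ∈ Finset.range j,
          I (i + 1 + 1) * I (j + 1 + 1)) =
        (∑ j ∈ Finset.range k, ∑ i ∈ Finset.range j,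
            I (i + 1 + 1) * δ (I (j + 1 + 1))) +
        ∑ j ∈ Finset.range k, ∑ i ∈ Finset.range j,
            δ (I (i + 1 + 1)) * I (j + 1 + 1) := by
      rw [dsum hadd, ← Finset.sum_add_distrib]
      refine Finset.sum_congr rfl fun j _ => ?_
      rw [dsum hadd, ← Finset.sum_add_distrib]
      exact Finset.sum_congr rfl fun i _ => hleib _ _
    have hδT : δ (∑ j ∈ Finset.range k, (j : R) * δ (I (j + 1 + 1))) =
        ∑ j ∈ Finset.range k, (j : R) * δ (δ (I (j + 1 + 1))) := by
      rw [dsum hadd]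
      exact Finset.sum_congr rfl fun j _ => dcmul hadd hleib _ _
    have hS : I 1 * (∑ j ∈ Finset.range k, ∑ i ∈ Finset.range j,
          I (i + 1 + 1) * I (j + 1 + 1)) =
        ∑ j ∈ Finset.range k, ∑ i ∈ Finset.range j,
            I 1 * (I (i + 1 + 1) * I (j + 1 + 1)) := by
      rw [Finset.mul_sum]
      exact Finset.sum_congr rfl fun j _ => Finset.mul_sum _ _ _
    have hT : I 1 * (∑ j ∈ Finset.range k, (j : R) * δ (I (j + 1 + 1))) =
        ∑ j ∈ Finset.range k, I 1 * ((j : R) * δ (I (j + 1 + 1))) :=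
      Finset.mul_sum _ _ _
    -- RHS pieces
    have hE1 : (∑ kk ∈ Finset.range (k+1), ∑ j ∈ Finset.range kk,
          ∑ i ∈ Finset.range j, I (i + 1) * I (j + 1) * I (kk + 1)) =
        (∑ kk ∈ Finset.range k, ∑ j ∈ Finset.range kk, ∑ i ∈ Finset.range j,
            I (i + 1 + 1) * I (j + 1 + 1) * I (kk + 1 + 1)) +
        ∑ kk ∈ Finset.range k, ∑ j ∈ Finset.range kk,
            I 1 * (I (j + 1 + 1) * I (kk + 1 + 1)) := by
      rw [Finset.sum_range_succ', Finset.sum_range_zero, add_zero,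
        ← Finset.sum_add_distrib]
      refine Finset.sum_congr rfl fun kk _ => ?_
      rw [Finset.sum_range_succ', Finset.sum_range_zero, add_zero,
        ← Finset.sum_add_distrib]
      refine Finset.sum_congr rfl fun j _ => ?_
      rw [Finset.sum_range_succ']
      ring
    have hE2 : (∑ j ∈ Finset.range (k+1), ∑ i ∈ Finset.range j,
          (i : R) * δ (I (i + 1)) * I (j + 1)) =
        (∑ j ∈ Finset.range k, ∑ i ∈ Finset.range j,
            (i : R) * δ (I (i + 1 + 1)) * I (j + 1 + 1)) +
        ∑ j ∈ Finset.range k, ∑ i ∈ Finset.range j,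
            δ (I (i + 1 + 1)) * I (j + 1 + 1) := by
      rw [Finset.sum_range_succ', Finset.sum_range_zero, add_zero,
        ← Finset.sum_add_distrib]
      refine Finset.sum_congr rfl fun j _ => ?_
      rw [Finset.sum_range_succ', ← Finset.sum_add_distrib]
      simp only [Nat.cast_zero, zero_mul, add_zero, Nat.cast_add, Nat.cast_one]
      exact Finset.sum_congr rfl fun i _ => by ring
    have hE3 : (∑ j ∈ Finset.range (k+1), ∑ i ∈ Finset.range j,
          ((j : R) - 1) * (I (i + 1) * δ (I (j + 1)))) =
        (∑ j ∈ Finset.range k, ∑ i ∈ Finset.range j,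
            ((j : R) - 1) * (I (i + 1 + 1) * δ (I (j + 1 + 1)))) +
        ((∑ j ∈ Finset.range k, ∑ i ∈ Finset.range j,
            I (i + 1 + 1) * δ (I (j + 1 + 1))) +
         ∑ j ∈ Finset.range k, I 1 * ((j : R) * δ (I (j + 1 + 1)))) := by
      rw [Finset.sum_range_succ', Finset.sum_range_zero, add_zero]
      rw [show (∑ j ∈ Finset.range k, ∑ i ∈ Finset.range (j+1),
            ((((j:ℕ)+1 : ℕ) : R) - 1) * (I (i + 1) * δ (I (j + 1 + 1)))) =
          ∑ j ∈ Finset.range k,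
            (((∑ i ∈ Finset.range j,
                ((j : R) - 1) * (I (i + 1 + 1) * δ (I (j + 1 + 1)))) +
              ∑ i ∈ Finset.range j, I (i + 1 + 1) * δ (I (j + 1 + 1))) +
              I 1 * ((j : R) * δ (I (j + 1 + 1)))) from
        Finset.sum_congr rfl fun j _ => by
          rw [Finset.sum_range_succ', ← Finset.sum_add_distrib]
          push_cast
          refine congrArg₂ (· + ·) (Finset.sum_congr rfl fun i _ => by ring) (by ring)]
      rw [Finset.sum_add_distrib, Finset.sum_add_distrib]
      ring
    have hE4 : (∑ i ∈ Finset.range (k+1), ((i.choose 2 : ℕ) : R) * δ (δ (I (i + 1)))) =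
        (∑ i ∈ Finset.range k, ((i.choose 2 : ℕ) : R) * δ (δ (I (i + 1 + 1)))) +
        ∑ i ∈ Finset.range k, (i : R) * δ (δ (I (i + 1 + 1))) := by
      rw [Finset.sum_range_succ', ← Finset.sum_add_distrib]
      simp only [Nat.choose_zero_succ, Nat.cast_zero, zero_mul, add_zero]
      refine Finset.sum_congr rfl fun i _ => ?_
      rw [show (i+1).choose 2 = i.choose 2 + i from by
        rw [Nat.choose_succ_succ]
        simp [Nat.choose_one_right, Nat.add_comm]]
      push_cast
      ring
    rw [hadd, mul_add, hδS, hδT, hS, hT, hE1, hE2, hE3, hE4]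
    ring

lemma ico_sum (f : ℕ → R) (m : ℕ) :
    ∑ i ∈ Finset.Ico 1 (m + 1), f i = ∑ i ∈ Finset.range m, f (i + 1) := by
  rw [Finset.sum_Ico_eq_sum_range]
  simp only [Nat.add_sub_cancel]
  exact Finset.sum_congr rfl fun i _ => by rw [Nat.add_comm]

lemma icc_sum (f : ℕ → R) (n : ℕ) :
    ∑ i ∈ Finset.Icc 1 n, f i = ∑ i ∈ Finset.range n, f (i + 1) := by
  rw [← Finset.Ico_add_one_right_eq_Icc, ico_sum]

include hadd hleib in
theorem miura_U3' (I : ℕ → R) (n : ℕ) :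
    miuraCoeff δ I n 3 =
      (∑ k ∈ Finset.Icc 1 n, ∑ j ∈ Finset.Ico 1 k, ∑ i ∈ Finset.Ico 1 j,
          I i * I j * I k) +
      (∑ j ∈ Finset.Icc 1 n, ∑ i ∈ Finset.Ico 1 j, ((i : R) - 1) * δ (I i) * I j) +
      (∑ j ∈ Finset.Icc 1 n, ∑ i ∈ Finset.Ico 1 j, ((j : R) - 2) * (I i * δ (I j))) +
      ∑ i ∈ Finset.Icc 1 n, (((i - 1).choose 2 : ℕ) : R) * δ (δ (I i)) := by
  rw [miura3r hadd hleib]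
  have h1 : (∑ k ∈ Finset.Icc 1 n, ∑ j ∈ Finset.Ico 1 k, ∑ i ∈ Finset.Ico 1 j,
        I i * I j * I k) =
      ∑ k ∈ Finset.range n, ∑ j ∈ Finset.range k, ∑ i ∈ Finset.range j,
        I (i + 1) * I (j + 1) * I (k + 1) := by
    rw [icc_sum]
    refine Finset.sum_congr rfl fun kk _ => ?_
    rw [ico_sum]
    exact Finset.sum_congr rfl fun j _ => by rw [ico_sum]
  have h2 : (∑ j ∈ Finset.Icc 1 n, ∑ i ∈ Finset.Ico 1 j,
        ((i : R) - 1) * δ (I i) * I j) =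
      ∑ j ∈ Finset.range n, ∑ i ∈ Finset.range j,
        (i : R) * δ (I (i + 1)) * I (j + 1) := by
    rw [icc_sum]
    refine Finset.sum_congr rfl fun j _ => ?_
    rw [ico_sum]
    refine Finset.sum_congr rfl fun i _ => ?_
    push_cast
    ring
  have h3 : (∑ j ∈ Finset.Icc 1 n, ∑ i ∈ Finset.Ico 1 j,
        ((j : R) - 2) * (I i * δ (I j))) =
      ∑ j ∈ Finset.range n, ∑ i ∈ Finset.range j,
        ((j : R) - 1) * (I (i + 1) * δ (I (j + 1))) := by
    rw [icc_sum]
    refine Finset.sum_congr rfl fun j _ => ?_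
    rw [ico_sum]
    refine Finset.sum_congr rfl fun i _ => ?_
    push_cast
    ring
  have h4 : (∑ i ∈ Finset.Icc 1 n, (((i - 1).choose 2 : ℕ) : R) * δ (δ (I i))) =
      ∑ i ∈ Finset.range n, ((i.choose 2 : ℕ) : R) * δ (δ (I (i + 1))) := by
    rw [icc_sum]
    exact Finset.sum_congr rfl fun i _ => by rw [Nat.add_sub_cancel]
  rw [h1, h2, h3, h4]

end aux

/-- In `(∂+I₁)⋯(∂+I_n) = ∂^n + ∑_j ⁿU_j ∂^{n-j}` one has
`ⁿU₃ = ∑_{i₁<i₂<i₃} I_{i₁}I_{i₂}I_{i₃} + ∑_{i₁<i₂}(i₁-1)I_{i₁}'I_{i₂}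
  + ∑_{i₁<i₂}(i₂-2)I_{i₁}I_{i₂}' + ∑_i C(i-1,2) I_i''`. -/
theorem miura_U3 {R : Type*} [CommRing R] (δ : R → R)
    (hadd : ∀ a b : R, δ (a + b) = δ a + δ b)
    (hleib : ∀ a b : R, δ (a * b) = a * δ b + δ a * b)
    (I : ℕ → R) (n : ℕ) :
    miuraCoeff δ I n 3 =
      (∑ k ∈ Finset.Icc 1 n, ∑ j ∈ Finset.Ico 1 k, ∑ i ∈ Finset.Ico 1 j,
          I i * I j * I k) +
      (∑ j ∈ Finset.Icc 1 n, ∑ i ∈ Finset.Ico 1 j, ((i : R) - 1) * δ (I i) * I j) +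
      (∑ j ∈ Finset.Icc 1 n, ∑ i ∈ Finset.Ico 1 j, ((j : R) - 2) * (I i * δ (I j))) +
      ∑ i ∈ Finset.Icc 1 n, (((i - 1).choose 2 : ℕ) : R) * δ (δ (I i)) := by
  exact miura_U3' hadd hleib I n
end

section
/- Splitting the Miura product at position m gives compatibility of coefficients: if (∂+I_1)⋯(∂+I_{m+n}) = ∂^{m+n} + ∑_j P_j ∂^{m+n−j}, (∂+I_1)⋯(∂+I_m) = ∂^m + ∑_j W_j ∂^{m−j}, and (∂+I_{m+1})⋯(∂+I_{m+n}) = ∂^n + ∑_j U_j ∂^{n−j}, then P_j = ∑_{0 ≤ a+b ≤ j} C(m−a, j−a−b) W_a U_b^{(j−a−b)}, where W_0 = U_0 = 1. -/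
/-- Generalized binomial coefficient `C(x, k) = x(x-1)⋯(x-k+1)/k!` over ℚ. -/
noncomputable def gbinomQ (x : ℚ) (k : ℕ) : ℚ :=
  (∏ i ∈ Finset.range k, (x - i)) / (k.factorial : ℚ)

lemma miuraCoeff_zero {R : Type*} [CommRing R] (δ : R → R) (I : ℕ → R) (n : ℕ) :
    miuraCoeff δ I n 0 = 1 := by
  induction n generalizing I with
  | zero => simp [miuraCoeff]
  | succ n ih => simp [miuraCoeff, ih]

lemma gbinom_zero_right (x : ℚ) : gbinomQ x 0 = 1 := by simp [gbinomQ]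

lemma gbinom_pascal (x : ℚ) (k : ℕ) :
    gbinomQ (x + 1) (k + 1) = gbinomQ x (k + 1) + gbinomQ x k := by
  unfold gbinomQ
  rw [Finset.prod_range_succ' (fun i => x + 1 - (i : ℚ)), Finset.prod_range_succ]
  have h1 : (fun i : ℕ => x + 1 - ((i + 1 : ℕ) : ℚ)) = fun i : ℕ => x - i := by
    funext i; push_cast; ring
  rw [h1]
  have hk : (k.factorial : ℚ) ≠ 0 := Nat.cast_ne_zero.2 k.factorial_ne_zero
  rw [Nat.factorial_succ]
  push_cast
  field_simp
  ring

lemma extend_rect {M : Type*} [AddCommMonoid M] (k : ℕ) (g : ℕ → ℕ → M)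
    (hg : ∀ a b, k < a + b → g a b = 0) :
    (∑ a ∈ Finset.range (k+2), ∑ b ∈ Finset.range (k+2), g a b)
      = ∑ a ∈ Finset.range (k+1), ∑ b ∈ Finset.range (k+1), g a b := by
  rw [Finset.sum_range_succ]
  rw [Finset.sum_eq_zero (fun b _ => hg _ b (by omega)), add_zero]
  refine Finset.sum_congr rfl fun a ha => ?_
  rw [Finset.sum_range_succ, hg a (k+1) (by omega), add_zero]

lemma core {R : Type*} [CommRing R] [Algebra ℚ R] (k : ℕ) (c : ℚ)
    (W V : ℕ → R) (D : ℕ → ℕ → R) (i1 : R) :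
    (∑ a ∈ Finset.range (k+2), ∑ b ∈ Finset.range (k+2),
        if a + b ≤ k + 1 then
          gbinomQ (c - a) (k+1-a-b) • (W a * D (k+1-a-b) b) else 0)
    + ((∑ a ∈ Finset.range (k+1), ∑ b ∈ Finset.range (k+1),
        if a + b ≤ k then
          gbinomQ (c - a) (k-a-b) • (W a * D ((k-a-b)+1) b + V a * D (k-a-b) b) else 0)
      + i1 * (∑ a ∈ Finset.range (k+1), ∑ b ∈ Finset.range (k+1),
        if a + b ≤ k then
          gbinomQ (c - a) (k-a-b) • (W a * D (k-a-b) b) else 0))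
    = ∑ a ∈ Finset.range (k+2), ∑ b ∈ Finset.range (k+2),
        if a + b ≤ k + 1 then
          gbinomQ (c + 1 - a) (k+1-a-b) •
            ((W a + if a = 0 then 0 else V (a-1) + i1 * W (a-1)) * D (k+1-a-b) b)
        else 0 := by
  -- Split RHS into two sums
  have h1 : (∑ a ∈ Finset.range (k+2), ∑ b ∈ Finset.range (k+2),
        if a + b ≤ k + 1 then
          gbinomQ (c + 1 - a) (k+1-a-b) •
            ((W a + if a = 0 then 0 else V (a-1) + i1 * W (a-1)) * D (k+1-a-b) b)
        else 0)
      = (∑ a ∈ Finset.range (k+2), ∑ b ∈ Finset.range (k+2),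
          if a + b ≤ k + 1 then
            gbinomQ (c + 1 - a) (k+1-a-b) • (W a * D (k+1-a-b) b) else 0)
        + (∑ a ∈ Finset.range (k+2), ∑ b ∈ Finset.range (k+2),
          if a + b ≤ k + 1 then
            gbinomQ (c + 1 - a) (k+1-a-b) •
              ((if a = 0 then 0 else V (a-1) + i1 * W (a-1)) * D (k+1-a-b) b) else 0) := by
    rw [← Finset.sum_add_distrib]
    refine Finset.sum_congr rfl fun a _ => ?_
    rw [← Finset.sum_add_distrib]
    refine Finset.sum_congr rfl fun b _ => ?_
    by_cases h : a + b ≤ k + 1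
    · rw [if_pos h, if_pos h, if_pos h, add_mul, smul_add]
    · rw [if_neg h, if_neg h, if_neg h, add_zero]
  -- Pascal on first piece
  have h2 : (∑ a ∈ Finset.range (k+2), ∑ b ∈ Finset.range (k+2),
          if a + b ≤ k + 1 then
            gbinomQ (c + 1 - a) (k+1-a-b) • (W a * D (k+1-a-b) b) else 0)
      = (∑ a ∈ Finset.range (k+2), ∑ b ∈ Finset.range (k+2),
          if a + b ≤ k + 1 then
            gbinomQ (c - a) (k+1-a-b) • (W a * D (k+1-a-b) b) else 0)
        + (∑ a ∈ Finset.range (k+2), ∑ b ∈ Finset.range (k+2),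
          if a + b ≤ k then
            gbinomQ (c - a) (k-a-b) • (W a * D ((k-a-b)+1) b) else 0) := by
    rw [← Finset.sum_add_distrib]
    refine Finset.sum_congr rfl fun a _ => ?_
    rw [← Finset.sum_add_distrib]
    refine Finset.sum_congr rfl fun b _ => ?_
    by_cases hk : a + b ≤ k
    · rw [if_pos (by omega), if_pos (by omega), if_pos hk]
      have e1 : k + 1 - a - b = (k - a - b) + 1 := by omega
      have e2 : c + 1 - a = (c - a) + 1 := by ring
      rw [e1, e2, gbinom_pascal, add_smul]
    · by_cases hk1 : a + b ≤ k + 1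
      · rw [if_pos hk1, if_pos hk1, if_neg hk, add_zero]
        have e1 : k + 1 - a - b = 0 := by omega
        rw [e1, gbinom_zero_right, gbinom_zero_right]
      · rw [if_neg hk1, if_neg hk1, if_neg hk, add_zero]
  -- Shift the second piece of RHS
  have h3 : (∑ a ∈ Finset.range (k+2), ∑ b ∈ Finset.range (k+2),
          if a + b ≤ k + 1 then
            gbinomQ (c + 1 - a) (k+1-a-b) •
              ((if a = 0 then 0 else V (a-1) + i1 * W (a-1)) * D (k+1-a-b) b) else 0)
      = (∑ a ∈ Finset.range (k+1), ∑ b ∈ Finset.range (k+1),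
          if a + b ≤ k then
            gbinomQ (c - a) (k-a-b) • (V a * D (k-a-b) b) else 0)
        + i1 * (∑ a ∈ Finset.range (k+1), ∑ b ∈ Finset.range (k+1),
          if a + b ≤ k then
            gbinomQ (c - a) (k-a-b) • (W a * D (k-a-b) b) else 0) := by
    rw [Finset.sum_range_succ']
    have h0 : (∑ b ∈ Finset.range (k+2),
        if 0 + b ≤ k + 1 then
          gbinomQ (c + 1 - (0:ℕ)) (k+1-0-b) •
            ((if (0:ℕ) = 0 then 0 else V (0-1) + i1 * W (0-1)) * D (k+1-0-b) b) else 0) = 0 := by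
      apply Finset.sum_eq_zero; intro b _; simp
    rw [h0, add_zero]
    have h4 : ∀ a ∈ Finset.range (k+1),
        (∑ b ∈ Finset.range (k+2),
          if (a+1) + b ≤ k + 1 then
            gbinomQ (c + 1 - ((a+1:ℕ):ℚ)) (k+1-(a+1)-b) •
              ((if a + 1 = 0 then 0 else V (a+1-1) + i1 * W (a+1-1)) * D (k+1-(a+1)-b) b) else 0)
        = ∑ b ∈ Finset.range (k+1),
          if a + b ≤ k then
            gbinomQ (c - a) (k-a-b) • ((V a + i1 * W a) * D (k-a-b) b) else 0 := by
      intro a ha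
      rw [Finset.sum_range_succ,
        if_neg (show ¬((a+1) + (k+1) ≤ k + 1) by omega), add_zero]
      refine Finset.sum_congr rfl fun b hb => ?_
      have e0 : ((a+1) + b ≤ k + 1) = (a + b ≤ k) := propext (by omega)
      have e1 : k+1-(a+1)-b = k-a-b := by omega
      have e2 : c + 1 - ((a+1:ℕ):ℚ) = c - a := by push_cast; ring
      simp only [e1, e2]
      by_cases h : a + b ≤ k
      · rw [if_pos (show a + 1 + b ≤ k + 1 by omega), if_pos h]
        simp
      · rw [if_neg (show ¬(a + 1 + b ≤ k + 1) by omega), if_neg h]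
    rw [Finset.sum_congr rfl h4]
    simp only [Finset.mul_sum]
    rw [← Finset.sum_add_distrib]
    refine Finset.sum_congr rfl fun a _ => ?_
    rw [← Finset.sum_add_distrib]
    refine Finset.sum_congr rfl fun b _ => ?_
    simp only [mul_ite, mul_zero]
    by_cases h : a + b ≤ k
    · rw [if_pos h, if_pos h, if_pos h, add_mul, smul_add, mul_smul_comm, mul_assoc]
    · simp [if_neg h]
  rw [h1, h2, h3]
  -- extend the W-part of the LHS middle sum
  have h5 : (∑ a ∈ Finset.range (k+1), ∑ b ∈ Finset.range (k+1),
        if a + b ≤ k then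
          gbinomQ (c - a) (k-a-b) • (W a * D ((k-a-b)+1) b + V a * D (k-a-b) b) else 0)
      = (∑ a ∈ Finset.range (k+2), ∑ b ∈ Finset.range (k+2),
          if a + b ≤ k then
            gbinomQ (c - a) (k-a-b) • (W a * D ((k-a-b)+1) b) else 0)
        + (∑ a ∈ Finset.range (k+1), ∑ b ∈ Finset.range (k+1),
          if a + b ≤ k then
            gbinomQ (c - a) (k-a-b) • (V a * D (k-a-b) b) else 0) := by
    rw [extend_rect k _ (fun a b h => if_neg (by omega))]
    rw [← Finset.sum_add_distrib]
    refine Finset.sum_congr rfl fun a _ => ?_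
    rw [← Finset.sum_add_distrib]
    refine Finset.sum_congr rfl fun b _ => ?_
    by_cases h : a + b ≤ k
    · rw [if_pos h, if_pos h, if_pos h, smul_add]
    · rw [if_neg h, if_neg h, if_neg h, add_zero]
  rw [h5]
  abel

lemma gbinom_zero (k : ℕ) (hk : k ≠ 0) : gbinomQ 0 k = 0 := by
  obtain ⟨k, rfl⟩ := Nat.exists_eq_succ_of_ne_zero hk
  unfold gbinomQ
  rw [Finset.prod_eq_zero (Finset.mem_range.2 (Nat.succ_pos k))]
  · simp
  · simp



lemma delta_zero {R : Type*} [CommRing R] (δ : R → R)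
    (hadd : ∀ a b : R, δ (a + b) = δ a + δ b) : δ 0 = 0 := by
  have h := hadd 0 0
  rw [add_zero] at h
  exact (add_eq_left.mp h.symm)

lemma delta_sum {R : Type*} [CommRing R] (δ : R → R)
    (hadd : ∀ a b : R, δ (a + b) = δ a + δ b)
    (s : Finset ℕ) (f : ℕ → R) :
    δ (∑ i ∈ s, f i) = ∑ i ∈ s, δ (f i) := by
  induction s using Finset.cons_induction with
  | empty => simpa using delta_zero δ hadd
  | cons a s ha ih => rw [Finset.sum_cons, hadd, ih, Finset.sum_cons]

lemma miura_aux {R : Type*} [CommRing R] [Algebra ℚ R] (δ : R → R)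
    (hadd : ∀ a b : R, δ (a + b) = δ a + δ b)
    (hleib : ∀ a b : R, δ (a * b) = a * δ b + δ a * b)
    (hsmul : ∀ (q : ℚ) (a : R), δ (q • a) = q • δ a)
    (m : ℕ) : ∀ (I : ℕ → R) (n j : ℕ),
    miuraCoeff δ I (m + n) j =
      ∑ a ∈ Finset.range (j + 1), ∑ b ∈ Finset.range (j + 1),
        if a + b ≤ j then
          gbinomQ ((m : ℚ) - a) (j - a - b) •
            (miuraCoeff δ I m a * δ^[j - a - b] (miuraCoeff δ (fun t => I (t + m)) n b))
        else 0 := by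
  induction m with
  | zero =>
    intro I n j
    rw [Nat.zero_add]
    rw [Finset.sum_eq_single 0]
    · rw [Finset.sum_eq_single j]
      · rw [if_pos (by omega)]
        simp [miuraCoeff, gbinom_zero_right]
      · intro b hb hbj
        rw [if_pos (by simp at hb; omega)]
        have : gbinomQ ((0:ℕ) - (0:ℕ) : ℚ) (j - 0 - b) = 0 := by
          simp at hb
          simpa using gbinom_zero (j - b) (by omega)
        rw [this, zero_smul]
      · intro h; simp at h
    · intro a _ ha
      apply Finset.sum_eq_zero
      intro b _
      simp [miuraCoeff, ha]
    · intro h; simp at h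
  | succ m ih =>
    intro I n j
    match j with
    | 0 =>
      rw [miuraCoeff_zero]
      simp [miuraCoeff_zero, gbinom_zero_right]
    | k+1 =>
      have hstep : miuraCoeff δ I (m + 1 + n) (k+1)
          = miuraCoeff δ (fun t => I (t + 1)) (m + n) (k+1)
            + (δ (miuraCoeff δ (fun t => I (t + 1)) (m + n) k)
               + I 1 * miuraCoeff δ (fun t => I (t + 1)) (m + n) k) := by
        rw [show m + 1 + n = (m + n) + 1 by omega]
        simp [miuraCoeff]
      rw [hstep, ih (fun t => I (t + 1)) n (k+1), ih (fun t => I (t + 1)) n k]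
      rw [delta_sum δ hadd]
      have hterm : ∀ a ∈ Finset.range (k+1),
          δ (∑ b ∈ Finset.range (k+1),
            if a + b ≤ k then
              gbinomQ ((m : ℚ) - a) (k - a - b) •
                (miuraCoeff δ (fun t => I (t + 1)) m a *
                  δ^[k - a - b] (miuraCoeff δ (fun t => I (t + m + 1)) n b))
            else 0)
          = ∑ b ∈ Finset.range (k+1),
            if a + b ≤ k then
              gbinomQ ((m : ℚ) - a) (k - a - b) •
                (miuraCoeff δ (fun t => I (t + 1)) m a *
                  δ^[(k - a - b) + 1] (miuraCoeff δ (fun t => I (t + m + 1)) n b)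
                 + δ (miuraCoeff δ (fun t => I (t + 1)) m a) *
                  δ^[k - a - b] (miuraCoeff δ (fun t => I (t + m + 1)) n b))
            else 0 := by
        intro a _
        rw [delta_sum δ hadd]
        refine Finset.sum_congr rfl fun b _ => ?_
        by_cases h : a + b ≤ k
        · rw [if_pos h, if_pos h, hsmul, hleib, Function.iterate_succ_apply']
        · rw [if_neg h, if_neg h, delta_zero δ hadd]
      rw [Finset.sum_congr rfl hterm]
      -- unfold miuraCoeff δ I (m+1) a on the RHS
      have hunf : ∀ a : ℕ, miuraCoeff δ I (m+1) a
          = miuraCoeff δ (fun t => I (t + 1)) m a +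
              if a = 0 then 0 else
                δ (miuraCoeff δ (fun t => I (t + 1)) m (a - 1)) +
                  I 1 * miuraCoeff δ (fun t => I (t + 1)) m (a - 1) := by
        intro a; rfl
      simp only [hunf]
      have hcast : ∀ a : ℕ, ((m + 1 : ℕ) : ℚ) - (a : ℚ) = ((m : ℚ)) + 1 - a := by
        intro a; push_cast; ring
      simp only [hcast]
      exact core k (m : ℚ) (fun a => miuraCoeff δ (fun t => I (t + 1)) m a)
        (fun a => δ (miuraCoeff δ (fun t => I (t + 1)) m a))
        (fun r b => δ^[r] (miuraCoeff δ (fun t => I (t + m + 1)) n b)) (I 1)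

/-- Splitting the Miura product at position `m`: if
`(∂+I₁)⋯(∂+I_{m+n}) = ∂^{m+n} + ∑_j P_j ∂^{m+n-j}`,
`(∂+I₁)⋯(∂+I_m) = ∂^m + ∑_j W_j ∂^{m-j}` and
`(∂+I_{m+1})⋯(∂+I_{m+n}) = ∂^n + ∑_j U_j ∂^{n-j}`, then
`P_j = ∑_{0 ≤ a+b ≤ j} C(m-a, j-a-b) W_a U_b^{(j-a-b)}` (with `W₀ = U₀ = 1`). -/
theorem miura_split {R : Type*} [CommRing R] [Algebra ℚ R] (δ : R → R)
    (hadd : ∀ a b : R, δ (a + b) = δ a + δ b)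
    (hleib : ∀ a b : R, δ (a * b) = a * δ b + δ a * b)
    (hsmul : ∀ (q : ℚ) (a : R), δ (q • a) = q • δ a)
    (I : ℕ → R) (m n j : ℕ) :
    miuraCoeff δ I (m + n) j =
      ∑ a ∈ Finset.range (j + 1), ∑ b ∈ Finset.range (j + 1 - a),
        gbinomQ ((m : ℚ) - a) (j - a - b) •
          (miuraCoeff δ I m a *
            δ^[j - a - b] (miuraCoeff δ (fun t => I (t + m)) n b)) := by
  rw [miura_aux δ hadd hleib hsmul m I n j]
  refine Finset.sum_congr rfl fun a ha => ?_
  have ha' : a ≤ j := by simp at ha; omega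
  rw [← Finset.sum_subset (Finset.range_subset_range.2 (show j + 1 - a ≤ j + 1 by omega))
      (fun b hb hb' => if_neg (by simp at hb hb'; omega))]
  refine Finset.sum_congr rfl fun b hb => ?_
  rw [if_pos (by simp at hb; omega)]
end
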